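/- The map sending a fractal sequence g to its subadditive triangle S(g), where S(g)(i,j) counts the occurrences of i in g strictly before the first occurrence of j (not counting g(0) = 0 when i = 0), is injective: two fractal sequences with the same subadditive triangle are equal. -/

import Mathlib

open Classical

noncomputable section

/-- The minimal excludant of a set of naturals. -/
def mex (S : Set ℕ) : ℕ := sInf {v | v ∉ S}

/-- A rule sequence is regular if `f 0 = 0`, `f n ≤ n`, and `f` increases by 0 or 1. -/
def Regular (f : ℕ → ℕ) : Prop :=
  f 0 = 0 ∧ (∀ n, f n ≤ n) ∧ ∀ n, f n ≤ f (n + 1) ∧ f (n + 1) ≤ f n + 1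

/-- `g` is the Grundy sequence for Maximum Nim with rule `f`:
`g n = mex { g (n - i) : 1 ≤ i ≤ f n }`. -/
def MaxNimGrundy (f g : ℕ → ℕ) : Prop :=
  ∀ n, g n = mex {v | ∃ i, 1 ≤ i ∧ i ≤ f n ∧ g (n - i) = v}

/-- `h` is the Grundy sequence for Minimum Nim with rule `f`:
`h n = mex { h i : 0 ≤ i ≤ n - f n - 1 }`. -/
def MinNimGrundy (f h : ℕ → ℕ) : Prop :=
  ∀ n, h n = mex {v | ∃ i, i + f n + 1 ≤ n ∧ h i = v}

/-- Every natural number occurs infinitely often. -/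
def Infinitive (g : ℕ → ℕ) : Prop := ∀ k, {n | g n = k}.Infinite

/-- The position of the first occurrence of `k` in `g`. -/
def firstOcc (g : ℕ → ℕ) (k : ℕ) : ℕ := sInf {n | g n = k}

/-- `n` is not the first occurrence of its value in `g`. -/
def NotFirst (g : ℕ → ℕ) (n : ℕ) : Prop := ∃ m < n, g m = g n

/-- The subsequence of `g` obtained by deleting the first occurrence of each value. -/
def Lam (g : ℕ → ℕ) : ℕ → ℕ := fun m => g (Nat.nth (NotFirst g) m)

/-- Kimberling's fractal sequences: infinitive, first occurrences in increasing
order of value (F2), and deleting first occurrences leaves the sequence unchanged (F3). -/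
def Fractal (g : ℕ → ℕ) : Prop :=
  Infinitive g ∧
  (∀ j k, j < k → firstOcc g j < firstOcc g k) ∧
  (∀ m, Lam g m = g m)

/-- The restriction `g|M`: the subsequence of terms of `g` lying in `M`. -/
def restrictSeq (g : ℕ → ℕ) (M : Set ℕ) : ℕ → ℕ :=
  fun m => g (Nat.nth (fun n => g n ∈ M) m)

/-- An interspersion: an infinitive sequence such that for `i < j` the restriction
`g|{i,j}` is an initial block of `i`'s followed by strict alternation `j, i, j, i, ...`. -/
def Interspersion (g : ℕ → ℕ) : Prop :=
  Infinitive g ∧ ∀ i j, i < j → ∃ N,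
    (∀ n < N, restrictSeq g {i, j} n = i) ∧
    ∀ n, restrictSeq g {i, j} (N + 2 * n) = j ∧
         restrictSeq g {i, j} (N + 2 * n + 1) = i

/-- `striangle g i j`: the number of occurrences of `i` strictly before the first
occurrence of `j`, not counting the occurrence `g 0 = 0` when `i = 0`. -/
def striangle (g : ℕ → ℕ) (i j : ℕ) : ℕ :=
  Set.ncard {n | g n = i ∧ n < firstOcc g j ∧ (i = 0 → n ≠ 0)}

/-- A subadditive triangle: `s i j + s j k - 1 ≤ s i k ≤ s i j + s j k` for `i < j < k`. -/
def SubadditiveTriangle (s : ℕ → ℕ → ℕ) : Prop :=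
  ∀ i j k, i < j → j < k →
    s i j + s j k ≤ s i k + 1 ∧ s i k ≤ s i j + s j k

lemma firstOcc_le_self (g : ℕ → ℕ) (n : ℕ) : firstOcc g (g n) ≤ n :=
  Nat.sInf_le rfl

lemma firstOcc_g_apply (g : ℕ → ℕ) (hg : Infinitive g) (k : ℕ) : g (firstOcc g k) = k :=
  Nat.sInf_mem (hg k).nonempty

lemma fractal_g0 (g : ℕ → ℕ) (hg : Fractal g) : g 0 = 0 := by
  by_contra hne
  have h1 : firstOcc g (g 0) = 0 := Nat.le_zero.mp (firstOcc_le_self g 0)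
  have := hg.2.1 0 (g 0) (Nat.pos_of_ne_zero hne)
  omega

lemma firstOcc_zero (g : ℕ → ℕ) (hg : Fractal g) : firstOcc g 0 = 0 :=
  Nat.le_zero.mp (Nat.sInf_le (fractal_g0 g hg))

lemma firstOcc_mono (g : ℕ → ℕ) (hg : Fractal g) {j k : ℕ} (hjk : j ≤ k) :
    firstOcc g j ≤ firstOcc g k := by
  rcases lt_or_eq_of_le hjk with hlt | rfl
  · exact le_of_lt (hg.2.1 j k hlt)
  · rfl

lemma val_lt_of_lt_firstOcc (g : ℕ → ℕ) (hg : Fractal g) {n j : ℕ}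
    (hn : n < firstOcc g j) : g n < j := by
  by_contra hge
  have h1 : firstOcc g j ≤ firstOcc g (g n) := firstOcc_mono g hg (not_lt.mp hge)
  have h2 := firstOcc_le_self g n
  omega

lemma striangle_card (g : ℕ → ℕ) (hg : Fractal g) {j : ℕ} (hj : 0 < j) (i : ℕ) :
    striangle g i j + (if i = 0 then 1 else 0) =
      ((Finset.range (firstOcc g j)).filter (fun n => g n = i)).card := by
  have hset : {n | g n = i ∧ n < firstOcc g j ∧ (i = 0 → n ≠ 0)} =
      ↑((Finset.range (firstOcc g j)).filter (fun n => g n = i ∧ (i = 0 → n ≠ 0))) := by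
    ext n
    simp only [Finset.coe_filter, Finset.mem_range, Set.mem_setOf_eq]
    tauto
  rw [striangle, hset, Set.ncard_coe_finset]
  have hNpos : 0 < firstOcc g j := by
    have := hg.2.1 0 j hj
    rw [firstOcc_zero g hg] at this
    exact this
  by_cases hi : i = 0
  · subst hi
    have h0mem : 0 ∈ (Finset.range (firstOcc g j)).filter (fun n => g n = 0) := by
      simp [fractal_g0 g hg, hNpos]
    have hfe : (Finset.range (firstOcc g j)).filter (fun n => g n = 0 ∧ (0 = 0 → n ≠ 0)) =
        ((Finset.range (firstOcc g j)).filter (fun n => g n = 0)).erase 0 := by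
      ext n
      simp only [Finset.mem_filter, Finset.mem_erase, Finset.mem_range]
      tauto
    rw [hfe, Finset.card_erase_of_mem h0mem]
    have hpos : 0 < ((Finset.range (firstOcc g j)).filter (fun n => g n = 0)).card :=
      Finset.card_pos.mpr ⟨0, h0mem⟩
    simp only [if_pos rfl]
    exact Nat.sub_add_cancel hpos
  · simp only [if_neg hi, add_zero]
    congr 1
    ext n
    simp only [Finset.mem_filter]
    tauto

lemma firstOcc_eq_sum (g : ℕ → ℕ) (hg : Fractal g) {j : ℕ} (hj : 0 < j) :
    firstOcc g j = 1 + ∑ i ∈ Finset.range j, striangle g i j := by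
  have hcard : (Finset.range (firstOcc g j)).card =
      ∑ i ∈ Finset.range j, ((Finset.range (firstOcc g j)).filter (fun n => g n = i)).card :=
    Finset.card_eq_sum_card_fiberwise (fun n hn => by
      simp only [Finset.mem_coe, Finset.mem_range] at hn ⊢
      exact val_lt_of_lt_firstOcc g hg hn)
  rw [Finset.card_range] at hcard
  have hsum : ∑ i ∈ Finset.range j, (striangle g i j + if i = 0 then 1 else 0) =
      ∑ i ∈ Finset.range j, ((Finset.range (firstOcc g j)).filter (fun n => g n = i)).card :=
    Finset.sum_congr rfl (fun i _ => striangle_card g hg hj i)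
  rw [Finset.sum_add_distrib] at hsum
  have hone : (∑ i ∈ Finset.range j, if i = 0 then 1 else 0) = 1 := by
    rw [Finset.sum_ite_eq' (Finset.range j) 0 (fun _ => 1)]
    simp [hj]
  omega

lemma notFirst_iff (g : ℕ → ℕ) (hg : Fractal g) (n : ℕ) :
    NotFirst g n ↔ ∀ k, firstOcc g k ≠ n := by
  constructor
  · rintro ⟨m, hm, hgm⟩ k hk
    have hgn : g n = k := by rw [← hk, firstOcc_g_apply g hg.1 k]
    have : firstOcc g k ≤ m := Nat.sInf_le (by rw [Set.mem_setOf_eq, hgm, hgn])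
    omega
  · intro hall
    have h1 : firstOcc g (g n) ≤ n := firstOcc_le_self g n
    have h2 : firstOcc g (g n) ≠ n := hall _
    exact ⟨firstOcc g (g n), lt_of_le_of_ne h1 h2, firstOcc_g_apply g hg.1 (g n)⟩

/-- the map from fractal sequences to subadditive triangles is
injective. -/
theorem fractal_to_striangle_injective (g h : ℕ → ℕ) (hg : Fractal g) (hh : Fractal h)
    (heq : ∀ i j, i < j → striangle g i j = striangle h i j) : g = h := by
  have hF : firstOcc g = firstOcc h := by
    funext j
    rcases Nat.eq_zero_or_pos j with rfl | hj
    · rw [firstOcc_zero g hg, firstOcc_zero h hh]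
    · rw [firstOcc_eq_sum g hg hj, firstOcc_eq_sum h hh hj]
      congr 1
      exact Finset.sum_congr rfl (fun i hi => heq i j (Finset.mem_range.mp hi))
  have hNF : NotFirst g = NotFirst h := by
    funext n
    exact propext (by rw [notFirst_iff g hg, notFirst_iff h hh, hF])
  funext n
  induction n using Nat.strong_induction_on with
  | _ n IH =>
    by_cases hn : NotFirst g n
    · have hp0 : ¬ NotFirst g 0 := by
        rintro ⟨m, hm, -⟩
        exact absurd hm (Nat.not_lt_zero m)
      have hn0 : n ≠ 0 := fun hn0 => hp0 (hn0 ▸ hn)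
      have hnth : Nat.nth (NotFirst g) (Nat.count (NotFirst g) n) = n := Nat.nth_count hn
      have hm : Nat.count (NotFirst g) n < n := by
        rw [Nat.count_eq_card_filter_range]
        have : (Finset.range n).filter (NotFirst g) ⊂ Finset.range n := by
          refine Finset.ssubset_iff_of_subset (Finset.filter_subset _ _) |>.mpr ?_
          exact ⟨0, Finset.mem_range.mpr (Nat.pos_of_ne_zero hn0),
            by simp [hp0]⟩
        simpa using Finset.card_lt_card this
      have h1 : g n = g (Nat.count (NotFirst g) n) := by
        conv_lhs => rw [← hnth]
        exact hg.2.2 (Nat.count (NotFirst g) n)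
      have h2 : h n = h (Nat.count (NotFirst g) n) := by
        have hnth' : Nat.nth (NotFirst h) (Nat.count (NotFirst h) n) = n :=
          Nat.nth_count (hNF ▸ hn)
        rw [← hNF] at hnth'
        conv_lhs => rw [← hnth']
        rw [hNF]
        exact hh.2.2 _
      rw [h1, h2, IH _ hm]
    · rw [notFirst_iff g hg] at hn
      push_neg at hn
      obtain ⟨k, hk⟩ := hn
      have hgn : g n = k := by rw [← hk, firstOcc_g_apply g hg.1 k]
      have hhn : h n = k := by
        rw [hF] at hk
        rw [← hk, firstOcc_g_apply h hh.1 k]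
      rw [hgn, hhn]
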